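/- Let M be a unital C*-algebra, N ⊆ M a unital C*-subalgebra, and F : M → N a conditional expectation. Suppose there exists a sequence (a_n) in M with 0 ≤ a_n ≤ 1, ‖a_n‖ = 1, and ‖F(a_n)‖ → 0 (which holds whenever F has infinite index). Then there exists a sequence of unitaries u_n ∈ M such that ‖u_n − 1‖_F → 0, while there is no sequence of unitaries v_n ∈ N with ‖u_n v_n − 1‖ → 0. Consequently the topologies induced on the coset space U_M/U_N by the norm ‖·‖ of M and by the modular norm ‖·‖_F are not equivalent. -/

import Mathlib

open Filter

section Aux
variable {M : Type*} [CStarAlgebra M] [PartialOrder M] [StarOrderedRing M]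

lemma aux_star (F : M →ₗ[ℂ] M) (hFpos : ∀ x : M, 0 ≤ x → 0 ≤ F x) (x : M) :
    F (star x) = star (F x) := by
  have hFsa : ∀ y : M, IsSelfAdjoint y → IsSelfAdjoint (F y) := by
    intro y hy
    have h1 : F y = F y⁺ - F y⁻ := by
      conv_lhs => rw [← CFC.posPart_sub_negPart y hy, map_sub]
    rw [h1]
    exact ((hFpos _ (CFC.posPart_nonneg y)).isSelfAdjoint.sub
      (hFpos _ (CFC.negPart_nonneg y)).isSelfAdjoint)
  have hx := realPart_add_I_smul_imaginaryPart x
  have hr : IsSelfAdjoint (realPart x : M) := (realPart x).prop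
  have hi : IsSelfAdjoint (imaginaryPart x : M) := (imaginaryPart x).prop
  have hFr : IsSelfAdjoint (F (realPart x : M)) := hFsa _ hr
  have hFi : IsSelfAdjoint (F (imaginaryPart x : M)) := hFsa _ hi
  conv_lhs => rw [← hx]
  conv_rhs => rw [← hx]
  rw [star_add, star_smul, hr.star_eq, hi.star_eq, map_add, map_smul, map_add, map_smul,
    star_add, star_smul, hFr.star_eq, hFi.star_eq]

lemma aux_schwarz (N : StarSubalgebra ℂ M) (F : M →ₗ[ℂ] M)
    (hFrange : ∀ x : M, F x ∈ N) (hFid : ∀ b ∈ N, F b = b)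
    (hFpos : ∀ x : M, 0 ≤ x → 0 ≤ F x)
    (hFbimod : ∀ x : M, ∀ b ∈ N, ∀ c ∈ N, F (b * x * c) = b * F x * c)
    (x : M) : star (F x) * F x ≤ F (star x * x) := by
  have key : 0 ≤ F (star (x - F x) * (x - F x)) := hFpos _ (star_mul_self_nonneg _)
  have hb := hFrange x
  have e1 : star (x - F x) * (x - F x)
      = star x * x - star x * F x - star (F x) * x + star (F x) * F x := by
    simp only [star_sub, sub_mul, mul_sub]
    abel
  have e2 : F (star x * F x) = star (F x) * F x := by
    have h := hFbimod (star x) 1 N.one_mem (F x) hb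
    simpa [aux_star F hFpos x] using h
  have e3 : F (star (F x) * x) = star (F x) * F x := by
    have h := hFbimod x (star (F x)) (star_mem hb) 1 N.one_mem
    simpa using h
  have e4 : F (star (F x) * F x) = star (F x) * F x :=
    hFid _ (mul_mem (star_mem hb) hb)
  rw [e1, map_add, map_sub, map_sub, e2, e3, e4] at key
  have key2 : 0 ≤ F (star x * x) - star (F x) * F x := by
    convert key using 1
    abel
  exact sub_nonneg.mp key2

lemma aux_contr (N : StarSubalgebra ℂ M) (F : M →ₗ[ℂ] M)
    (hFrange : ∀ x : M, F x ∈ N) (hFid : ∀ b ∈ N, F b = b)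
    (hFpos : ∀ x : M, 0 ≤ x → 0 ≤ F x)
    (hFbimod : ∀ x : M, ∀ b ∈ N, ∀ c ∈ N, F (b * x * c) = b * F x * c)
    [Nontrivial M] :
    (∀ x : M, ‖F x‖ ≤ ‖x‖) ∧ (∀ x : M, ‖F x‖ ≤ Real.sqrt ‖F (star x * x)‖) := by
  have hFposContr : ∀ y : M, 0 ≤ y → ‖F y‖ ≤ ‖y‖ := by
    intro y hy
    have h1 : y ≤ algebraMap ℝ M ‖y‖ := IsSelfAdjoint.le_algebraMap_norm_self hy.isSelfAdjoint
    have halg : (algebraMap ℝ M ‖y‖) ∈ N := by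
      rw [IsScalarTower.algebraMap_apply ℝ ℂ M]
      exact N.algebraMap_mem _
    have h2 : F y ≤ algebraMap ℝ M ‖y‖ := by
      have h := hFpos _ (sub_nonneg.mpr h1)
      rw [map_sub, hFid _ halg] at h
      exact sub_nonneg.mp h
    calc ‖F y‖ ≤ ‖algebraMap ℝ M ‖y‖‖ :=
          CStarAlgebra.norm_le_norm_of_nonneg_of_le (hFpos y hy) h2
      _ = ‖y‖ := by rw [norm_algebraMap', Real.norm_of_nonneg (norm_nonneg y)]
  have hsq : ∀ x : M, ‖F x‖ * ‖F x‖ ≤ ‖F (star x * x)‖ := by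
    intro x
    rw [← CStarRing.norm_star_mul_self]
    exact CStarAlgebra.norm_le_norm_of_nonneg_of_le (star_mul_self_nonneg _)
      (aux_schwarz N F hFrange hFid hFpos hFbimod x)
  refine ⟨fun x => ?_, fun x => ?_⟩
  · have h2 := hFposContr _ (star_mul_self_nonneg x)
    have h3 : ‖star x * x‖ = ‖x‖ * ‖x‖ := CStarRing.norm_star_mul_self
    nlinarith [hsq x, norm_nonneg (F x), norm_nonneg x]
  · rw [show ‖F x‖ = Real.sqrt (‖F x‖ * ‖F x‖) from (Real.sqrt_mul_self (norm_nonneg _)).symm]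
    exact Real.sqrt_le_sqrt (hsq x)

lemma aux_prod (c s : M) (hc : IsSelfAdjoint c) (hs : IsSelfAdjoint s) (hcomm : c * s = s * c) :
    star (c + Complex.I • s) * (c + Complex.I • s) = c * c + s * s ∧
    (c + Complex.I • s) * star (c + Complex.I • s) = c * c + s * s := by
  have hstar : star (c + Complex.I • s) = c - Complex.I • s := by
    simp [star_add, star_smul, hc.star_eq, hs.star_eq, Complex.star_def, Complex.conj_I,
      sub_eq_add_neg, neg_smul]
  have hjj : (Complex.I • s) * (Complex.I • s) = -(s * s) := by
    rw [smul_mul_assoc, mul_smul_comm, smul_smul, Complex.I_mul_I, neg_one_smul]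
  have hcj : c * (Complex.I • s) = (Complex.I • s) * c := by
    rw [mul_smul_comm, smul_mul_assoc, hcomm]
  constructor
  · rw [hstar, sub_mul, mul_add, mul_add, hcj, hjj]
    abel
  · rw [hstar, mul_sub, add_mul, add_mul, hcj, hjj]
    abel

lemma aux_u [Nontrivial M] (b : M) (hb0 : 0 ≤ b) (hb1 : b ≤ 1) (hnb : ‖b‖ = 1) :
    ∃ u : M, u ∈ unitary M ∧ star (u - 1) * (u - 1) ≤ Real.pi ^ 2 • b ∧ 2 ≤ ‖u - 1‖ := by
  have hbsa : IsSelfAdjoint b := hb0.isSelfAdjoint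
  set f : ℝ → ℝ := fun t => Real.cos (Real.pi * t) with hf
  set g : ℝ → ℝ := fun t => Real.sin (Real.pi * t) with hg
  have hfc : Continuous f := by fun_prop
  have hgc : Continuous g := by fun_prop
  set c := cfc f b with hc
  set s := cfc g b with hs
  have hcsa : IsSelfAdjoint c := cfc_predicate f b
  have hssa : IsSelfAdjoint s := cfc_predicate g b
  have hcomm : c * s = s * c := by
    rw [hc, hs, ← cfc_mul f g b, ← cfc_mul g f b]
    exact cfc_congr fun t _ => mul_comm _ _
  have hone : c * c + s * s = 1 := by
    rw [hc, hs, ← cfc_mul f f b, ← cfc_mul g g b,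
      ← cfc_add b (fun t => f t * f t) (fun t => g t * g t)]
    rw [show (fun t => f t * f t + g t * g t) = (fun _ : ℝ => (1 : ℝ)) from funext fun t => by
      simpa [hf, hg, ← pow_two] using Real.cos_sq_add_sin_sq (Real.pi * t)]
    exact cfc_const_one ℝ b
  have hc1 : c - 1 = cfc (fun t => f t - 1) b := by
    rw [cfc_sub f (fun _ => (1 : ℝ)) b, cfc_const_one ℝ b, hc]
  have hc1sa : IsSelfAdjoint (c - 1) := hc1 ▸ cfc_predicate _ b
  have hc1comm : (c - 1) * s = s * (c - 1) := by
    simp only [sub_mul, mul_sub, one_mul, mul_one, hcomm]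
  have hsq : star ((c + Complex.I • s) - 1) * ((c + Complex.I • s) - 1)
      = cfc (fun t => (f t - 1) * (f t - 1) + g t * g t) b := by
    have e : (c + Complex.I • s) - 1 = (c - 1) + Complex.I • s := by abel
    rw [e, (aux_prod (c - 1) s hc1sa hssa hc1comm).1, hc1,
      ← cfc_mul (fun t => f t - 1) (fun t => f t - 1) b, hs, ← cfc_mul g g b,
      ← cfc_add b (fun t => (f t - 1) * (f t - 1)) (fun t => g t * g t)]
  refine ⟨c + Complex.I • s, ?_, ?_, ?_⟩
  · exact ⟨(aux_prod c s hcsa hssa hcomm).1.trans hone,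
      (aux_prod c s hcsa hssa hcomm).2.trans hone⟩
  · rw [hsq, show Real.pi ^ 2 • b = cfc (fun t : ℝ => Real.pi ^ 2 * t) b from
      (cfc_const_mul_id _ b).symm]
    refine cfc_mono (fun t ht => ?_)
      ((((hfc.sub continuous_const).mul (hfc.sub continuous_const)).add
        (hgc.mul hgc)).continuousOn)
      ((continuous_const.mul continuous_id).continuousOn)
    have ht0 : 0 ≤ t := spectrum_nonneg_of_nonneg hb0 ht
    have ht1 : t ≤ 1 := by
      have h := spectrum.norm_le_norm_of_mem ht
      rw [hnb, Real.norm_eq_abs] at h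
      exact (abs_le.mp h).2
    have hcos := Real.one_sub_sq_div_two_le_cos (x := Real.pi * t)
    have hpyth := Real.sin_sq_add_cos_sq (Real.pi * t)
    simp only [hf, hg]
    have hπt : (Real.pi * t) ^ 2 = Real.pi ^ 2 * t ^ 2 := by ring
    calc (Real.cos (Real.pi * t) - 1) * (Real.cos (Real.pi * t) - 1)
        + Real.sin (Real.pi * t) * Real.sin (Real.pi * t)
        = 2 - 2 * Real.cos (Real.pi * t) := by linear_combination hpyth
      _ ≤ Real.pi ^ 2 * t ^ 2 := by rw [← hπt]; linarith
      _ ≤ Real.pi ^ 2 * t := by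
          nlinarith [sq_nonneg Real.pi, mul_nonneg ht0 (sub_nonneg.mpr ht1)]
  · have h4 : (4 : ℝ) ∈ spectrum ℝ (cfc (fun t => (f t - 1) * (f t - 1) + g t * g t) b) := by
      rw [cfc_map_spectrum _ b hbsa (show Continuous (fun t => (f t - 1) * (f t - 1) + g t * g t)
        by fun_prop).continuousOn]
      refine ⟨1, ?_, ?_⟩
      · have h := CStarAlgebra.norm_mem_spectrum_of_nonneg hb0
        rwa [hnb] at h
      · simp [hf, hg, Real.cos_pi, Real.sin_pi]
        norm_num
    have h5 : (4 : ℝ) ≤ ‖star ((c + Complex.I • s) - 1) * ((c + Complex.I • s) - 1)‖ := by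
      rw [hsq]
      have h := spectrum.norm_le_norm_of_mem h4
      simpa using h
    rw [CStarRing.norm_star_mul_self] at h5
    nlinarith [norm_nonneg ((c + Complex.I • s) - 1)]
end Aux

theorem stmt11 {M : Type*} [CStarAlgebra M] [PartialOrder M] [StarOrderedRing M]
    -- `N` is a unital C*-subalgebra of `M`
    (N : StarSubalgebra ℂ M) (hNclosed : IsClosed (N : Set M))
    -- `F` is a conditional expectation onto `N`
    (F : M →ₗ[ℂ] M) (hFrange : ∀ x : M, F x ∈ N) (hFid : ∀ b ∈ N, F b = b)
    (hFpos : ∀ x : M, 0 ≤ x → 0 ≤ F x)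
    (hFbimod : ∀ x : M, ∀ b ∈ N, ∀ c ∈ N, F (b * x * c) = b * F x * c)
    -- a sequence as produced by infinite index
    (a : ℕ → M) (ha0 : ∀ n, 0 ≤ a n) (ha1 : ∀ n, a n ≤ 1) (hna : ∀ n, ‖a n‖ = 1)
    (hFa : Tendsto (fun n => ‖F (a n)‖) atTop (nhds 0)) :
    -- there are unitaries `u n` with `‖u n - 1‖_F → 0` but no unitaries `v n` in `N`
    -- with `‖u n * v n - 1‖ → 0`
    (∃ u : ℕ → M, (∀ n, u n ∈ unitary M) ∧
      Tendsto (fun n => Real.sqrt ‖F (star (u n - 1) * (u n - 1))‖) atTop (nhds 0) ∧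
      ¬ ∃ v : ℕ → M, (∀ n, v n ∈ N ∧ v n ∈ unitary M) ∧
        Tendsto (fun n => ‖u n * v n - 1‖) atTop (nhds 0)) ∧
    -- consequently, the quotient topologies on `U_M / U_N` induced by `‖·‖` and `‖·‖_F`
    -- are not equivalent: they do not have the same convergent sequences of cosets
    ¬ (∀ u : ℕ → M, (∀ n, u n ∈ unitary M) → ∀ w ∈ unitary M,
        (Tendsto (fun n => sInf {r : ℝ | ∃ v v' : M,
            (v ∈ N ∧ v ∈ unitary M) ∧ (v' ∈ N ∧ v' ∈ unitary M) ∧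
            r = ‖u n * v - w * v'‖}) atTop (nhds 0) ↔
         Tendsto (fun n => sInf {r : ℝ | ∃ v v' : M,
            (v ∈ N ∧ v ∈ unitary M) ∧ (v' ∈ N ∧ v' ∈ unitary M) ∧
            r = Real.sqrt ‖F (star (u n * v - w * v') * (u n * v - w * v'))‖}) atTop
            (nhds 0))) := by
  haveI : Nontrivial M := nontrivial_of_ne (a 0) 0 (by
    intro h
    have := hna 0
    rw [h, norm_zero] at this
    exact one_ne_zero this.symm)
  obtain ⟨hC, hCs⟩ := aux_contr N F hFrange hFid hFpos hFbimod
  have hFmono : ∀ x y : M, x ≤ y → F x ≤ F y := by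
    intro x y h
    have h2 := hFpos _ (sub_nonneg.mpr h)
    rw [map_sub] at h2
    exact sub_nonneg.mp h2
  -- construct the unitaries
  choose u huU hule hun2 using fun n => aux_u (a n) (ha0 n) (ha1 n) (hna n)
  -- the F-norm bound
  have key : ∀ n, ‖F (star (u n - 1) * (u n - 1))‖ ≤ Real.pi ^ 2 * ‖F (a n)‖ := by
    intro n
    have h1 : F (star (u n - 1) * (u n - 1)) ≤ F (Real.pi ^ 2 • a n) := hFmono _ _ (hule n)
    rw [F.map_smul_of_tower] at h1
    calc ‖F (star (u n - 1) * (u n - 1))‖ ≤ ‖Real.pi ^ 2 • F (a n)‖ :=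
          CStarAlgebra.norm_le_norm_of_nonneg_of_le (hFpos _ (star_mul_self_nonneg _)) h1
      _ = Real.pi ^ 2 * ‖F (a n)‖ := by
          rw [norm_smul, Real.norm_eq_abs, abs_of_nonneg (sq_nonneg _)]
  have tendsto1 : Tendsto (fun n => Real.sqrt ‖F (star (u n - 1) * (u n - 1))‖)
      atTop (nhds 0) := by
    have h0 : Tendsto (fun n => Real.sqrt (Real.pi ^ 2 * ‖F (a n)‖)) atTop (nhds 0) := by
      have h1 : Tendsto (fun n => Real.pi ^ 2 * ‖F (a n)‖) atTop (nhds 0) := by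
        simpa using hFa.const_mul (Real.pi ^ 2)
      simpa using h1.sqrt
    exact squeeze_zero (fun n => Real.sqrt_nonneg _)
      (fun n => Real.sqrt_le_sqrt (key n)) h0
  -- no approximating sequence of unitaries in N
  have hnoseq : ¬ ∃ v : ℕ → M, (∀ n, v n ∈ N ∧ v n ∈ unitary M) ∧
      Tendsto (fun n => ‖u n * v n - 1‖) atTop (nhds 0) := by
    rintro ⟨v, hvN, hvT⟩
    have hb2 : ∀ n, 2 ≤ 2 * ‖u n * v n - 1‖
        + Real.sqrt ‖F (star (u n - 1) * (u n - 1))‖ := by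
      intro n
      obtain ⟨hvNn, hvUn⟩ := hvN n
      have hvv : v n * star (v n) = 1 := Unitary.mul_star_self_of_mem hvUn
      have hnvs : ‖star (v n)‖ = 1 := by
        rw [norm_star]; exact CStarRing.norm_of_mem_unitary hvUn
      have e1 : u n - star (v n) = (u n * v n - 1) * star (v n) := by
        rw [sub_mul, one_mul, mul_assoc, hvv, mul_one]
      have h2 : ‖u n - star (v n)‖ ≤ ‖u n * v n - 1‖ := by
        rw [e1]
        calc ‖(u n * v n - 1) * star (v n)‖ ≤ ‖u n * v n - 1‖ * ‖star (v n)‖ := norm_mul_le _ _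
          _ = ‖u n * v n - 1‖ := by rw [hnvs, mul_one]
      have h3 : ‖star (v n) - F (u n)‖ ≤ ‖u n * v n - 1‖ := by
        have e2 : star (v n) - F (u n) = F (star (v n) - u n) := by
          rw [map_sub, hFid _ (star_mem hvNn)]
        rw [e2]
        refine (hC _).trans ?_
        rw [norm_sub_rev]
        exact h2
      have h4 : ‖F (u n) - 1‖ ≤ Real.sqrt ‖F (star (u n - 1) * (u n - 1))‖ := by
        have e3 : F (u n) - 1 = F (u n - 1) := by rw [map_sub, hFid 1 N.one_mem]
        rw [e3]
        exact hCs _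
      have h5 : ‖u n - 1‖ ≤ ‖u n - star (v n)‖ + ‖star (v n) - F (u n)‖ + ‖F (u n) - 1‖ := by
        calc ‖u n - 1‖
            = ‖(u n - star (v n)) + (star (v n) - F (u n)) + (F (u n) - 1)‖ := by
              congr 1; abel
          _ ≤ ‖u n - star (v n)‖ + ‖star (v n) - F (u n)‖ + ‖F (u n) - 1‖ := norm_add₃_le
      linarith [hun2 n]
    have hlim : Tendsto (fun n => 2 * ‖u n * v n - 1‖
        + Real.sqrt ‖F (star (u n - 1) * (u n - 1))‖) atTop (nhds 0) := by
      simpa using (hvT.const_mul 2).add tendsto1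
    have : (2 : ℝ) ≤ 0 := ge_of_tendsto hlim (Eventually.of_forall hb2)
    linarith
  refine ⟨⟨u, huU, tendsto1, hnoseq⟩, ?_⟩
  intro hiff
  have h := hiff u huU 1 (one_mem _)
  -- the modular-norm infima tend to zero
  have hF2 : Tendsto (fun n => sInf {r : ℝ | ∃ v v' : M,
      (v ∈ N ∧ v ∈ unitary M) ∧ (v' ∈ N ∧ v' ∈ unitary M) ∧
      r = Real.sqrt ‖F (star (u n * v - 1 * v') * (u n * v - 1 * v'))‖}) atTop (nhds 0) := by
    have hmem : ∀ n, Real.sqrt ‖F (star (u n - 1) * (u n - 1))‖ ∈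
        {r : ℝ | ∃ v v' : M, (v ∈ N ∧ v ∈ unitary M) ∧ (v' ∈ N ∧ v' ∈ unitary M) ∧
          r = Real.sqrt ‖F (star (u n * v - 1 * v') * (u n * v - 1 * v'))‖} := by
      intro n
      exact ⟨1, 1, ⟨N.one_mem, one_mem _⟩, ⟨N.one_mem, one_mem _⟩, by simp⟩
    have hbdd : ∀ n, ∀ r ∈ {r : ℝ | ∃ v v' : M,
        (v ∈ N ∧ v ∈ unitary M) ∧ (v' ∈ N ∧ v' ∈ unitary M) ∧
        r = Real.sqrt ‖F (star (u n * v - 1 * v') * (u n * v - 1 * v'))‖}, 0 ≤ r := by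
      rintro n r ⟨v, v', _, _, rfl⟩
      exact Real.sqrt_nonneg _
    refine squeeze_zero (fun n => Real.sInf_nonneg (hbdd n)) (fun n => ?_) tendsto1
    exact csInf_le ⟨0, fun r hr => hbdd n r hr⟩ (hmem n)
  have hN2 := h.mpr hF2
  -- extract an approximating sequence, contradicting `hnoseq`
  have hsel : ∀ n : ℕ, ∃ w : M, (w ∈ N ∧ w ∈ unitary M) ∧
      ‖u n * w - 1‖ < sInf {r : ℝ | ∃ v v' : M,
        (v ∈ N ∧ v ∈ unitary M) ∧ (v' ∈ N ∧ v' ∈ unitary M) ∧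
        r = ‖u n * v - 1 * v'‖} + 1 / (n + 1) := by
    intro n
    have hne : {r : ℝ | ∃ v v' : M,
        (v ∈ N ∧ v ∈ unitary M) ∧ (v' ∈ N ∧ v' ∈ unitary M) ∧
        r = ‖u n * v - 1 * v'‖}.Nonempty :=
      ⟨‖u n * 1 - 1 * 1‖, 1, 1, ⟨N.one_mem, one_mem _⟩, ⟨N.one_mem, one_mem _⟩, rfl⟩
    obtain ⟨r, hrT, hrlt⟩ := Real.lt_sInf_add_pos hne
      (show (0:ℝ) < 1 / (n + 1) by positivity)
    obtain ⟨v, v', ⟨hvN, hvU⟩, ⟨hv'N, hv'U⟩, rfl⟩ := hrT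
    have hv'v' : v' * star v' = 1 := Unitary.mul_star_self_of_mem hv'U
    refine ⟨v * star v', ⟨mul_mem hvN (star_mem hv'N), mul_mem hvU (Unitary.star_mem hv'U)⟩, ?_⟩
    have e : u n * (v * star v') - 1 = (u n * v - 1 * v') * star v' := by
      calc u n * (v * star v') - 1 = u n * v * star v' - v' * star v' := by
            rw [mul_assoc, hv'v']
        _ = (u n * v - 1 * v') * star v' := by rw [sub_mul, one_mul]
    calc ‖u n * (v * star v') - 1‖ = ‖(u n * v - 1 * v') * star v'‖ := by rw [e]
      _ ≤ ‖u n * v - 1 * v'‖ * ‖star v'‖ := norm_mul_le _ _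
      _ = ‖u n * v - 1 * v'‖ := by
          rw [norm_star, CStarRing.norm_of_mem_unitary hv'U, mul_one]
      _ < _ := hrlt
  choose w hw hwlt using hsel
  refine hnoseq ⟨w, hw, ?_⟩
  have hlim2 : Tendsto (fun n : ℕ => sInf {r : ℝ | ∃ v v' : M,
      (v ∈ N ∧ v ∈ unitary M) ∧ (v' ∈ N ∧ v' ∈ unitary M) ∧
      r = ‖u n * v - 1 * v'‖} + 1 / (n + 1)) atTop (nhds 0) := by
    simpa using hN2.add tendsto_one_div_add_atTop_nhds_zero_nat
  exact squeeze_zero (fun n => norm_nonneg _) (fun n => (hwlt n).le) hlim2
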